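/- Deodhar's defect formula: for any expression $\underline{x} = \underline{s_1 s_2 \cdots s_m}$ in the generators of a Coxeter system, the product $\underline{H}_{\underline{x}} = \underline{H}_{s_1} \cdots \underline{H}_{s_m}$ in the Hecke algebra equals $\sum_{e} v^{d(e)} H_e$, where the sum runs over all $2^m$ subsequences $e \in \{0,1\}^m$, $H_e = H_{s_1^{e_1} \cdots s_m^{e_m}}$ (product in $W$), and $d(e)$ is the defect of $e$: the number of indices $i$ with $e_i = 0$ and $w_{i-1} s_i > w_{i-1}$ minus the number of indices $i$ with $e_i = 0$ and $w_{i-1} s_i < w_{i-1}$, where $w_i = s_1^{e_1}\cdots s_i^{e_i}$. -/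

import Mathlib

open LaurentPolynomial


private theorem stmt13_aux {B W : Type*} [Group W] {M : CoxeterMatrix B} (cs : CoxeterSystem M W)
    {A : Type*} [Ring A] [Algebra (LaurentPolynomial ℤ) A]
    (H : W → A)
    (hone : H 1 = 1)
    (hgt : ∀ (w : W) (i : B), cs.length (w * cs.simple i) = cs.length w + 1 →
      H w * H (cs.simple i) = H (w * cs.simple i))
    (hlt : ∀ (w : W) (i : B), cs.length (w * cs.simple i) + 1 = cs.length w →
      H w * H (cs.simple i) = H (w * cs.simple i) +
        algebraMap (LaurentPolynomial ℤ) A (T (-1) - T 1) * H w)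
    (m : ℕ) (c : Fin m → B) :
    (List.ofFn fun i : Fin m =>
        H (cs.simple (c i)) + algebraMap (LaurentPolynomial ℤ) A (T 1)).prod =
      ∑ f : Fin m → Bool,
        algebraMap (LaurentPolynomial ℤ) A
            (T (∑ i : Fin m,
              if f i then (0 : ℤ)
              else
                if cs.length
                      ((List.ofFn fun j : Fin m =>
                        if f j then cs.simple (c j) else 1).take i.1).prod <
                    cs.length
                      (((List.ofFn fun j : Fin m =>
                        if f j then cs.simple (c j) else 1).take i.1).prod *
                        cs.simple (c i))
                then 1 else -1)) *
          H (List.ofFn fun j : Fin m =>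
              if f j then cs.simple (c j) else 1).prod := by
  induction m with
  | zero => simp [hone]
  | succ n ih =>
    have hV : ∀ a b : ℤ, algebraMap (LaurentPolynomial ℤ) A (T (a + b)) =
        algebraMap (LaurentPolynomial ℤ) A (T a) * algebraMap (LaurentPolynomial ℤ) A (T b) :=
      fun a b => by rw [T_add, map_mul]
    set b : B := c (Fin.last n) with hb
    set c' : Fin n → B := fun i => c i.castSucc with hc'
    -- the list associated to the extended Boolean vector
    have key : ∀ (g : Fin n → Bool) (bo : Bool),
        (List.ofFn fun j : Fin (n+1) => if (Fin.snoc (α := fun _ => Bool) g bo j) then cs.simple (c j) else 1) =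
        (List.ofFn fun j : Fin n => if g j then cs.simple (c' j) else 1) ++
          [if bo then cs.simple b else 1] := by
      intro g bo
      rw [List.ofFn_succ', List.concat_eq_append]
      simp [hc', hb]
    -- rewrite LHS
    rw [List.ofFn_succ', List.concat_eq_append, List.prod_append, List.prod_singleton, ih c',
      Finset.sum_mul]
    -- reindex RHS
    rw [← Equiv.sum_comp (Fin.snocEquiv fun _ => Bool)]
    rw [Fintype.sum_prod_type]
    rw [Finset.sum_comm]
    refine Finset.sum_congr rfl fun g _ => ?_
    rw [Fintype.sum_bool]
    simp only [Fin.snocEquiv_apply]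
    rw [← hb]
    set L : List W := List.ofFn fun j : Fin n => if g j = true then cs.simple (c' j) else 1
      with hL
    have hlen : L.length = n := by simp [hL]
    have htake : ∀ (x : W) (i : Fin n), (L ++ [x]).take i.1 = L.take i.1 := fun x i =>
      List.take_append_of_le_length (by rw [hlen]; exact i.isLt.le)
    have htakeL : ∀ x : W, (L ++ [x]).take n = L := fun x => by
      rw [List.take_append_of_le_length (by simp [hlen]), ← hlen, List.take_length]
    simp only [key g true, key g false]
    rw [List.prod_append, List.prod_singleton, List.prod_append, List.prod_singleton]
    rw [Fin.sum_univ_castSucc, Fin.sum_univ_castSucc]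
    have hc'' : ∀ i : Fin n, c i.castSucc = c' i := fun i => rfl
    simp only [Fin.snoc_castSucc, Fin.snoc_last, Fin.coe_castSucc, Fin.val_last, htake, htakeL,
      hc'', Bool.false_eq_true, if_false, if_true, add_zero, mul_one, ← hL, ← hb]
    rw [hV]
    rcases cs.length_mul_simple L.prod b with h | h
    · rw [if_pos (by omega), mul_add, mul_assoc, hgt L.prod b h,
        mul_assoc _ (H L.prod) (algebraMap (LaurentPolynomial ℤ) A (T 1)),
        (Algebra.commutes (T 1) (H L.prod)).symm]
      noncomm_ring
    · rw [if_neg (by omega), mul_add, mul_assoc, hlt L.prod b h, map_sub,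
        mul_assoc _ (H L.prod) (algebraMap (LaurentPolynomial ℤ) A (T 1)),
        (Algebra.commutes (T 1) (H L.prod)).symm]
      noncomm_ring

/-- Deodhar's defect formula: for any expression `s_1 ⋯ s_m` in the simple
reflections of a Coxeter system, in the Hecke algebra one has
`\underline{H}_{s_1} ⋯ \underline{H}_{s_m} = ∑_e v^{d(e)} H_e` where the sum runs over all
`2^m` subsequences `e ∈ {0,1}^m`, `H_e = H_{s_1^{e_1} ⋯ s_m^{e_m}}`, and the defect `d(e)`
counts indices `i` with `e_i = 0` and `w_{i-1} s_i > w_{i-1}` minus those with `e_i = 0`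
and `w_{i-1} s_i < w_{i-1}` (`w_i = s_1^{e_1} ⋯ s_i^{e_i}`; `w s > w` iff
`ℓ(w s) > ℓ(w)`).  The Hecke algebra is formalized as any `ℤ[v^{±1}]`-algebra `A` equipped
with a standard basis map `H : W → A` satisfying the defining multiplication rules. -/
theorem stmt13 {B W : Type*} [Group W] {M : CoxeterMatrix B} (cs : CoxeterSystem M W)
    {A : Type*} [Ring A] [Algebra (LaurentPolynomial ℤ) A]
    (H : W → A)
    (hone : H 1 = 1)
    (hgt : ∀ (w : W) (i : B), cs.length (w * cs.simple i) = cs.length w + 1 →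
      H w * H (cs.simple i) = H (w * cs.simple i))
    (hlt : ∀ (w : W) (i : B), cs.length (w * cs.simple i) + 1 = cs.length w →
      H w * H (cs.simple i) = H (w * cs.simple i) +
        algebraMap (LaurentPolynomial ℤ) A (T (-1) - T 1) * H w)
    (l : List B) :
    (l.map fun i => H (cs.simple i) + algebraMap (LaurentPolynomial ℤ) A (T 1)).prod =
      ∑ f : Fin l.length → Bool,
        algebraMap (LaurentPolynomial ℤ) A
            (T (∑ i : Fin l.length,
              if f i then (0 : ℤ)
              else
                if cs.length
                      ((List.ofFn fun j : Fin l.length =>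
                        if f j then cs.simple (l.get j) else 1).take i.1).prod <
                    cs.length
                      (((List.ofFn fun j : Fin l.length =>
                        if f j then cs.simple (l.get j) else 1).take i.1).prod *
                        cs.simple (l.get i))
                then 1 else -1)) *
          H (List.ofFn fun j : Fin l.length =>
              if f j then cs.simple (l.get j) else 1).prod := by
  rw [← List.ofFn_getElem_eq_map l fun i => H (cs.simple i) + algebraMap (LaurentPolynomial ℤ) A (T 1)]
  exact stmt13_aux cs H hone hgt hlt l.length l.get
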